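/- Let M be a difference field and let K be a difference subfield of M which is inversive (σ(K) = K) and such that M is transformally algebraic over K. Then M is an algebraic field extension of σ(M). -/

import Mathlib

/-! STATEMENT 7: if `K` is an inversive difference subfield of `M` and `M` is
transformally algebraic over `K`, then `M` is algebraic over `σ(M)`. -/

/-- A family `b` is algebraically independent over the subfield `A`. -/
def AlgIndepOver {Ω : Type*} [Field Ω] (A : Subfield Ω) {ι : Type*} (b : ι → Ω) : Prop :=
  ∀ P : MvPolynomial ι Ω, (∀ m, MvPolynomial.coeff m P ∈ A) →
    MvPolynomial.eval b P = 0 → P = 0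

/-- `x` is algebraic over the subfield `A`. -/
def IsAlgElemOver {Ω : Type*} [Field Ω] (A : Subfield Ω) (x : Ω) : Prop :=
  ∃ f : Polynomial Ω, f ≠ 0 ∧ (∀ n, f.coeff n ∈ A) ∧ Polynomial.eval x f = 0

/-- `a` is transformally algebraic over the subfield `K` of `(Ω, σ)`: the family
`(σ^n a)` is algebraically dependent over `K`. -/
def TransAlgElemOver {Ω : Type*} [Field Ω] (σ : Ω →+* Ω) (K : Subfield Ω) (a : Ω) : Prop :=
  ¬ AlgIndepOver K (fun n : ℕ => (⇑σ)^[n] a)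

open MvPolynomial in
/-- Pull back a polynomial with coefficients in `K` along `σ`, using inversiveness. -/
lemma exists_pullback {M : Type*} [Field M] (σ : M →+* M) (K : Subfield M)
    (hinv : K.map σ = K) {ι : Type*} (Q : MvPolynomial ι M)
    (hQK : ∀ m, MvPolynomial.coeff m Q ∈ K) :
    ∃ Q' : MvPolynomial ι M, (∀ m, MvPolynomial.coeff m Q' ∈ K) ∧
      MvPolynomial.map σ Q' = Q := by
  classical
  have hpre : ∀ m : ι →₀ ℕ, ∃ c : M, c ∈ K ∧ σ c = Q.coeff m := by
    intro m
    have : Q.coeff m ∈ K.map σ := by rw [hinv]; exact hQK m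
    obtain ⟨c, hc, hcs⟩ := this
    exact ⟨c, hc, hcs⟩
  choose c hcK hcσ using hpre
  refine ⟨∑ m ∈ Q.support, monomial m (c m), ?_, ?_⟩
  · intro m
    rw [coeff_sum]
    refine Subfield.sum_mem _ ?_
    intro i _
    rw [coeff_monomial]
    split
    · exact hcK _
    · exact K.zero_mem
  · rw [map_sum]
    have : ∀ m ∈ Q.support, (MvPolynomial.map σ) (monomial m (c m)) = monomial m (Q.coeff m) := by
      intro m _
      rw [map_monomial, hcσ]
    rw [Finset.sum_congr rfl this]
    exact (Q.as_sum).symm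

open MvPolynomial in
lemma key {M : Type*} [Field M] (σ : M →+* M) (K : Subfield M)
    (hinv : K.map σ = K) (x : M) :
    ∀ n (P : MvPolynomial (Fin n) M), P ≠ 0 → (∀ m, MvPolynomial.coeff m P ∈ K) →
      MvPolynomial.eval (fun i : Fin n => (⇑σ)^[(i : ℕ)] x) P = 0 →
      IsAlgElemOver σ.fieldRange x := by
  have hKrange : (K : Set M) ⊆ (σ.fieldRange : Set M) := by
    intro k hk
    have : k ∈ K.map σ := hinv.symm ▸ hk
    obtain ⟨c, _, hc⟩ := this
    exact ⟨c, hc⟩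
  intro n
  induction n with
  | zero =>
    intro P hP0 _ hPe
    obtain ⟨a, rfl⟩ := MvPolynomial.C_surjective (Fin 0) P
    rw [eval_C] at hPe
    exact absurd (by rw [hPe, map_zero]) hP0
  | succ n ih =>
    intro P hP0 hPK hPe
    set s : Fin n → M := fun i => (⇑σ)^[(i : ℕ) + 1] x with hs
    have hvs : (fun i : Fin (n + 1) => (⇑σ)^[(i : ℕ)] x) = Fin.cons x s := by
      funext j
      refine Fin.cases ?_ ?_ j
      · simp
      · intro i
        simp [hs, Fin.val_succ]
    rw [hvs, eval_eq_eval_mv_eval'] at hPe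
    set q := finSuccEquiv M n P with hq
    have hq0 : q ≠ 0 := by
      intro h
      exact hP0 ((finSuccEquiv M n).injective (by simp [← hq, h]))
    have hsrange : ∀ i, s i ∈ σ.fieldRange := by
      intro i
      rw [hs]
      simp only [Function.iterate_succ_apply']
      exact ⟨(⇑σ)^[(i : ℕ)] x, rfl⟩
    by_cases hf : Polynomial.map (eval s) q = 0
    · -- all coefficients of q evaluate to zero; take a nonzero one and pull back
      obtain ⟨k, hk⟩ : ∃ k, q.coeff k ≠ 0 := by
        by_contra h
        push_neg at h
        exact hq0 (Polynomial.ext fun k => by simp [h k])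
      have hev : eval s (q.coeff k) = 0 := by
        have := congrArg (fun p => Polynomial.coeff p k) hf
        simpa [Polynomial.coeff_map] using this
      have hQK : ∀ m, (q.coeff k).coeff m ∈ K := by
        intro m
        rw [hq, finSuccEquiv_coeff_coeff]
        exact hPK _
      obtain ⟨Q', hQ'K, hQ'map⟩ := exists_pullback σ K hinv (q.coeff k) hQK
      have hQ'0 : Q' ≠ 0 := by
        intro h
        rw [h, map_zero] at hQ'map
        exact hk hQ'map.symm
      have hQ'e : eval (fun i : Fin n => (⇑σ)^[(i : ℕ)] x) Q' = 0 := by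
        apply σ.injective
        rw [map_zero]
        have h1 : σ (eval (fun i : Fin n => (⇑σ)^[(i : ℕ)] x) Q') =
            eval s (MvPolynomial.map σ Q') := by
          rw [eval_map]
          rw [show (MvPolynomial.eval fun i : Fin n => (⇑σ)^[(i : ℕ)] x) Q' =
            eval₂ (RingHom.id M) (fun i : Fin n => (⇑σ)^[(i : ℕ)] x) Q' from rfl]
          rw [eval₂_comp_left σ]
          congr 1
          funext i
          simp [hs, Function.comp, Function.iterate_succ_apply']
        rw [h1, hQ'map, hev]
      exact ih Q' hQ'0 hQ'K hQ'e
    · -- the evaluated polynomial is a nonzero witness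
      refine ⟨Polynomial.map (eval s) q, hf, ?_, hPe⟩
      intro m
      rw [Polynomial.coeff_map]
      apply eval_mem
      · intro i _
        rw [hq, finSuccEquiv_coeff_coeff]
        exact hKrange (hPK _)
      · exact hsrange

theorem statement7 {M : Type*} [Field M] (σ : M →+* M) (K : Subfield M)
    -- K is an inversive difference subfield of M
    (hinv : K.map σ = K)
    -- M is transformally algebraic over K
    (hta : ∀ a : M, TransAlgElemOver σ K a) :
    -- M is algebraic over σ(M)
    ∀ x : M, IsAlgElemOver σ.fieldRange x := by
  classical
  intro x
  have h := hta x
  rw [TransAlgElemOver, AlgIndepOver] at h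
  push_neg at h
  obtain ⟨P, hPK, hPe, hP0⟩ := h
  obtain ⟨n, f, hfinj, p, rfl⟩ := MvPolynomial.exists_fin_rename P
  have hp0 : p ≠ 0 := by
    rintro rfl
    simp at hP0
  set N := (Finset.univ.sup f) + 1 with hN
  have hfN : ∀ i, f i < N := fun i =>
    Nat.lt_succ_of_le (Finset.le_sup (Finset.mem_univ i))
  set g : Fin n → Fin N := fun i => ⟨f i, hfN i⟩ with hg
  have hginj : Function.Injective g := by
    intro a b hab
    apply hfinj
    simpa [hg, Fin.ext_iff] using hab
  set Q : MvPolynomial (Fin N) M := MvPolynomial.rename g p with hQ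
  have hQ0 : Q ≠ 0 := fun h => hp0 ((MvPolynomial.rename_injective g hginj) (by simp [← hQ, h]))
  have hQK : ∀ m, MvPolynomial.coeff m Q ∈ K := by
    intro m
    by_cases hm : MvPolynomial.coeff m Q = 0
    · rw [hm]; exact K.zero_mem
    · obtain ⟨u, hu, _⟩ := MvPolynomial.coeff_rename_ne_zero g p m hm
      rw [← hu, MvPolynomial.coeff_rename_mapDomain g hginj]
      have := hPK (u.mapDomain f)
      rwa [MvPolynomial.coeff_rename_mapDomain f hfinj] at this
  have hQe : MvPolynomial.eval (fun i : Fin N => (⇑σ)^[(i : ℕ)] x) Q = 0 := by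
    rw [hQ, MvPolynomial.eval_rename]
    rw [MvPolynomial.eval_rename] at hPe
    convert hPe using 2
    rfl
  exact key σ K hinv x N Q hQ0 hQK hQe
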